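/- Let V be a finite-dimensional complex inner product space of dimension n and Herm(V) the real vector space of hermitian endomorphisms of V. For every nonzero rational linear form λ ∈ (ℚ^n)^*, the set S_λ = {A ∈ Herm(V) : λ(X(A)) = 0}, where X(A) ∈ ℝ^n is the ordered tuple of eigenvalues of A counted with multiplicity, is nowhere dense in Herm(V). -/

import Mathlib

open scoped Matrix

/-- The ordered tuple `X(A)` of eigenvalues (with multiplicity, in non-decreasing order)
of a hermitian matrix `A`. -/
noncomputable def orderedEigenvalues {n : ℕ} {A : Matrix (Fin n) (Fin n) ℂ}
    (hA : A.IsHermitian) : Fin n → ℝ :=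
  hA.eigenvalues ∘ Tuple.sort hA.eigenvalues

section RationalRelationAux

open Matrix Polynomial

variable {n : ℕ}

lemma aux_det_conj (U : Matrix.unitaryGroup (Fin n) ℂ) (x : Fin n → ℝ) (z : ℝ) :
    Matrix.det ((z : ℂ) • (1 : Matrix (Fin n) (Fin n) ℂ)
      - (U : Matrix (Fin n) (Fin n) ℂ) * Matrix.diagonal (Complex.ofReal ∘ x) *
        star (U : Matrix (Fin n) (Fin n) ℂ))
    = ((∏ i, (z - x i) : ℝ) : ℂ) := by
  have hU : (U : Matrix (Fin n) (Fin n) ℂ) * star (U : Matrix (Fin n) (Fin n) ℂ) = 1 :=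
    Matrix.mem_unitaryGroup_iff.mp U.2
  have h1 : (z : ℂ) • (1 : Matrix (Fin n) (Fin n) ℂ)
      = (U : Matrix (Fin n) (Fin n) ℂ) * ((z : ℂ) • 1) * star (U : Matrix (Fin n) (Fin n) ℂ) := by
    rw [Matrix.mul_smul, Matrix.smul_mul, Matrix.mul_one, hU]
  rw [h1, ← Matrix.sub_mul, ← Matrix.mul_sub, Matrix.det_mul, Matrix.det_mul]
  have h2 : ((z : ℂ) • (1 : Matrix (Fin n) (Fin n) ℂ) - Matrix.diagonal (Complex.ofReal ∘ x))
      = Matrix.diagonal (fun i => (z : ℂ) - x i) := by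
    ext i j
    by_cases h : i = j <;>
      simp [Matrix.diagonal_apply, h, Matrix.one_apply, Function.comp]
  rw [h2, Matrix.det_diagonal]
  have h3 : Matrix.det (U : Matrix (Fin n) (Fin n) ℂ) *
      (∏ i, ((z : ℂ) - x i)) * Matrix.det (star (U : Matrix (Fin n) (Fin n) ℂ))
      = (Matrix.det ((U : Matrix (Fin n) (Fin n) ℂ) * star (U : Matrix (Fin n) (Fin n) ℂ)))
        * ∏ i, ((z : ℂ) - x i) := by
    rw [Matrix.det_mul]; ring
  rw [h3, hU, Matrix.det_one, one_mul]
  push_cast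
  rfl

lemma aux_multiset_eq_of_prod_eq {v w : Fin n → ℝ}
    (h : ∀ z : ℝ, ∏ i, (z - v i) = ∏ i, (z - w i)) :
    Multiset.map v Finset.univ.val = Multiset.map w Finset.univ.val := by
  have hpq : (∏ i, (X - C (v i)) : ℝ[X]) = ∏ i, (X - C (w i)) := by
    apply Polynomial.funext
    intro z
    simpa [Polynomial.eval_prod] using h z
  have hv : (∏ i, (X - C (v i)) : ℝ[X]).roots = Multiset.map v Finset.univ.val := by
    have : Multiset.map (fun i => X - C (v i)) Finset.univ.val
        = Multiset.map (fun a => X - C a) (Multiset.map v Finset.univ.val) := by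
      rw [Multiset.map_map]; rfl
    rw [Finset.prod_eq_multiset_prod, this, Polynomial.roots_multiset_prod_X_sub_C]
  have hw : (∏ i, (X - C (w i)) : ℝ[X]).roots = Multiset.map w Finset.univ.val := by
    have : Multiset.map (fun i => X - C (w i)) Finset.univ.val
        = Multiset.map (fun a => X - C a) (Multiset.map w Finset.univ.val) := by
      rw [Multiset.map_map]; rfl
    rw [Finset.prod_eq_multiset_prod, this, Polynomial.roots_multiset_prod_X_sub_C]
  rw [← hv, ← hw, hpq]

lemma aux_monotone_unique {v w : Fin n → ℝ} (hv : Monotone v) (hw : Monotone w)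
    (h : Multiset.map v Finset.univ.val = Multiset.map w Finset.univ.val) : v = w := by
  apply List.ofFn_injective
  have hperm : (List.ofFn v).Perm (List.ofFn w) := by
    rw [← Multiset.coe_eq_coe, ← Fin.univ_val_map, ← Fin.univ_val_map]
    exact h
  exact List.Perm.eq_of_sortedLE
    (List.sortedLE_ofFn_iff.mpr hv) (List.sortedLE_ofFn_iff.mpr hw) hperm

lemma aux_monotone_ext {v w : Fin n → ℝ} (hv : Monotone v) (hw : Monotone w)
    (h : ∀ z : ℝ, ∏ i, (z - v i) = ∏ i, (z - w i)) : v = w :=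
  aux_monotone_unique hv hw (aux_multiset_eq_of_prod_eq h)

noncomputable def muE (A : {M : Matrix (Fin n) (Fin n) ℂ // M.IsHermitian}) : Fin n → ℝ :=
  orderedEigenvalues A.2

lemma muE_monotone (A : {M : Matrix (Fin n) (Fin n) ℂ // M.IsHermitian}) :
    Monotone (muE A) := Tuple.monotone_sort _

lemma prod_muE_eq (A : {M : Matrix (Fin n) (Fin n) ℂ // M.IsHermitian}) (z : ℝ) :
    ∏ i, (z - muE A i) = ∏ i, (z - A.2.eigenvalues i) :=
  Equiv.prod_comp (Tuple.sort A.2.eigenvalues) (fun i => z - A.2.eigenvalues i)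

lemma det_eq_prod_muE (A : {M : Matrix (Fin n) (Fin n) ℂ // M.IsHermitian}) (z : ℝ) :
    Matrix.det ((z : ℂ) • (1 : Matrix (Fin n) (Fin n) ℂ) - A.1)
      = ((∏ i, (z - muE A i) : ℝ) : ℂ) := by
  conv_lhs => rw [A.2.spectral_theorem, Unitary.conjStarAlgAut_apply]
  rw [show (RCLike.ofReal ∘ A.2.eigenvalues : Fin n → ℂ) = Complex.ofReal ∘ A.2.eigenvalues
      from rfl, aux_det_conj, prod_muE_eq]

lemma trace_sq_eq (A : {M : Matrix (Fin n) (Fin n) ℂ // M.IsHermitian}) :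
    (Matrix.trace (A.1 * A.1)).re = ∑ i, (muE A i)^2 := by
  have hU : star (A.2.eigenvectorUnitary : Matrix (Fin n) (Fin n) ℂ) *
      (A.2.eigenvectorUnitary : Matrix (Fin n) (Fin n) ℂ) = 1 :=
    Matrix.mem_unitaryGroup_iff'.mp A.2.eigenvectorUnitary.2
  have h : A.1 * A.1 = (A.2.eigenvectorUnitary : Matrix (Fin n) (Fin n) ℂ) *
      (Matrix.diagonal (fun i => ((A.2.eigenvalues i : ℂ))^2)) *
      star (A.2.eigenvectorUnitary : Matrix (Fin n) (Fin n) ℂ) := by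
    conv_lhs => rw [A.2.spectral_theorem, Unitary.conjStarAlgAut_apply]
    rw [show ∀ (U D : Matrix (Fin n) (Fin n) ℂ), (U * D * star U) * (U * D * star U)
        = U * (D * (star U * U) * D) * star U by intros; noncomm_ring]
    rw [hU, Matrix.mul_one, Matrix.diagonal_mul_diagonal]
    congr 2
    funext i
    simp [Function.comp, sq]
  rw [h, Matrix.trace_mul_cycle, hU, Matrix.one_mul, Matrix.trace_diagonal]
  have : ∑ i, ((A.2.eigenvalues i : ℂ))^2 = ((∑ i, (A.2.eigenvalues i)^2 : ℝ) : ℂ) := by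
    push_cast; rfl
  rw [this, Complex.ofReal_re]
  exact (Equiv.sum_comp (Tuple.sort A.2.eigenvalues)
    (fun i => (A.2.eigenvalues i)^2)).symm

lemma continuous_muE : Continuous (muE (n := n)) := by
  rw [continuous_iff_continuousAt]
  intro A₀
  unfold ContinuousAt
  rw [Filter.tendsto_iff_ultrafilter]
  intro u hu
  set F : Filter {M : Matrix (Fin n) (Fin n) ℂ // M.IsHermitian} := ↑u with hF
  haveI : F.NeBot := u.neBot
  set c : {M : Matrix (Fin n) (Fin n) ℂ // M.IsHermitian} → ℝ :=
    fun A => (Matrix.trace (A.1 * A.1)).re with hc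
  have hccont : Continuous c :=
    Complex.continuous_re.comp
      ((continuous_subtype_val.matrix_mul continuous_subtype_val).matrix_trace)
  set R := Real.sqrt (c A₀ + 1) with hR
  set K : Set (Fin n → ℝ) := Set.univ.pi (fun _ => Set.Icc (-R) R) with hKdef
  have hK : IsCompact K := isCompact_univ_pi (fun _ => isCompact_Icc)
  have hbound : ∀ A, c A < c A₀ + 1 → muE A ∈ K := by
    intro A hA i _
    have h1 : (muE A i)^2 ≤ c A := by
      simp only [hc]
      rw [trace_sq_eq]
      exact Finset.single_le_sum (f := fun j => (muE A j)^2)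
        (fun j _ => sq_nonneg _) (Finset.mem_univ i)
    exact abs_le.mp (Real.abs_le_sqrt (h1.trans hA.le))
  have hev : ∀ᶠ A in F, muE A ∈ K := by
    have hmem : {A | c A < c A₀ + 1} ∈ F :=
      hu (IsOpen.mem_nhds (isOpen_lt hccont continuous_const) (by simp))
    exact (Filter.eventually_iff.mpr hmem).mono hbound
  have hle : (↑(Ultrafilter.map muE u) : Filter _) ≤ Filter.principal K :=
    Filter.le_principal_iff.mpr hev
  obtain ⟨t, htK, htle⟩ := hK.ultrafilter_le_nhds (Ultrafilter.map muE u) hle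
  have htendsto : Filter.Tendsto muE F (nhds t) := htle
  have htmono : Monotone t := by
    have hclosed : IsClosed {x : Fin n → ℝ | Monotone x} := by
      have hset : {x : Fin n → ℝ | Monotone x}
          = ⋂ (i : Fin n) (j : Fin n) (_ : i ≤ j), {x | x i ≤ x j} := by
        ext x
        simp only [Set.mem_setOf_eq, Set.mem_iInter]
        exact ⟨fun h i j hij => h hij, fun h i j hij => h i j hij⟩
      rw [hset]
      exact isClosed_iInter fun i => isClosed_iInter fun j => isClosed_iInter fun _ =>
        isClosed_le (continuous_apply i) (continuous_apply j)
    exact hclosed.mem_of_tendsto htendsto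
      (Filter.Eventually.of_forall (fun A => muE_monotone A))
  have hz : ∀ z : ℝ, ∏ i, (z - t i) = ∏ i, (z - muE A₀ i) := by
    intro z
    have hcontz : Continuous (fun x : Fin n → ℝ => ∏ i, (z - x i)) :=
      continuous_finset_prod _ fun i _ => continuous_const.sub (continuous_apply i)
    have h1 : Filter.Tendsto (fun A => ∏ i, (z - muE A i)) F
        (nhds (∏ i, (z - t i))) := (hcontz.tendsto t).comp htendsto
    have hcontd : Continuous (fun A : {M : Matrix (Fin n) (Fin n) ℂ // M.IsHermitian} =>
        (Matrix.det ((z : ℂ) • (1 : Matrix (Fin n) (Fin n) ℂ) - A.1)).re) :=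
      Complex.continuous_re.comp ((continuous_const.sub continuous_subtype_val).matrix_det)
    have h2 : Filter.Tendsto (fun A => ∏ i, (z - muE A i)) F
        (nhds (∏ i, (z - muE A₀ i))) := by
      have h3 := (hcontd.tendsto A₀).mono_left (hu : F ≤ _)
      have heq : (fun A : {M : Matrix (Fin n) (Fin n) ℂ // M.IsHermitian} =>
          (Matrix.det ((z : ℂ) • (1 : Matrix (Fin n) (Fin n) ℂ) - A.1)).re)
          = fun A => ∏ i, (z - muE A i) := by
        funext A
        rw [det_eq_prod_muE, Complex.ofReal_re]
      rw [heq] at h3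
      rw [show (Matrix.det ((z : ℂ) • (1 : Matrix (Fin n) (Fin n) ℂ) - A₀.1)).re
          = ∏ i, (z - muE A₀ i) by rw [det_eq_prod_muE, Complex.ofReal_re]] at h3
      exact h3
    exact tendsto_nhds_unique h1 h2
  have ht : t = muE A₀ := aux_monotone_ext htmono (muE_monotone A₀) hz
  rwa [ht] at htendsto

lemma aux_exists_w (lam : Fin n → ℚ) (hlam : lam ≠ 0) :
    ∃ w : Fin n → ℝ, StrictMono w ∧ ∑ i, (lam i : ℝ) * w i ≠ 0 := by
  obtain ⟨j, hj⟩ := Function.ne_iff.mp hlam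
  have hjR : ((lam j : ℝ)) ≠ 0 := by exact_mod_cast hj
  set c₀ : ℝ := ∑ i, (lam i : ℝ) * ((i : ℕ) : ℝ) with hc₀
  obtain ⟨ε, hε0, hε1, hεne⟩ : ∃ ε : ℝ, 0 ≤ ε ∧ ε < 1 ∧ c₀ + ε * lam j ≠ 0 := by
    by_cases h : c₀ + (1/2) * lam j = 0
    · refine ⟨1/4, by norm_num, by norm_num, fun h4 => hjR ?_⟩
      nlinarith [h, h4]
    · exact ⟨1/2, by norm_num, by norm_num, h⟩
  refine ⟨fun i => ((i : ℕ) : ℝ) + ε * (if i = j then 1 else 0), ?_, ?_⟩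
  · intro i k hik
    have h2 : ((i : ℕ) : ℝ) + 1 ≤ ((k : ℕ) : ℝ) := by
      exact_mod_cast Nat.succ_le_of_lt hik
    have h3 : ε * (if i = j then 1 else 0) ≤ ε := by split <;> simp [hε0]
    have h4 : (0:ℝ) ≤ ε * (if k = j then 1 else 0) := by split <;> simp [hε0]
    simp only
    linarith
  · have hs : ∑ i, (lam i : ℝ) * (((i : ℕ) : ℝ) + ε * (if i = j then 1 else 0))
        = c₀ + ε * lam j := by
      rw [hc₀]
      simp only [mul_add, Finset.sum_add_distrib]
      congr 1
      have heach : ∀ i : Fin n, (lam i : ℝ) * (ε * (if i = j then 1 else 0))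
          = (if i = j then ε * (lam j : ℝ) else 0) := by
        intro i
        by_cases h : i = j <;> simp [h] <;> ring
      rw [Finset.sum_congr rfl (fun i _ => heach i), Finset.sum_ite_eq' Finset.univ j]
      simp
    rw [hs]; exact hεne

lemma aux_isHermitian (U : Matrix.unitaryGroup (Fin n) ℂ) (x : Fin n → ℝ) :
    ((U : Matrix (Fin n) (Fin n) ℂ) * Matrix.diagonal (Complex.ofReal ∘ x) *
      star (U : Matrix (Fin n) (Fin n) ℂ)).IsHermitian := by
  have hd : (Matrix.diagonal (Complex.ofReal ∘ x)).IsHermitian := by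
    apply Matrix.isHermitian_diagonal_of_self_adjoint
    funext i
    exact Complex.conj_ofReal (x i)
  simpa [Matrix.star_eq_conjTranspose] using
    Matrix.isHermitian_mul_mul_conjTranspose (U : Matrix (Fin n) (Fin n) ℂ) hd

lemma aux_prod_mu_conj (U : Matrix.unitaryGroup (Fin n) ℂ) (x : Fin n → ℝ)
    (B : {M : Matrix (Fin n) (Fin n) ℂ // M.IsHermitian})
    (hB : B.1 = (U : Matrix (Fin n) (Fin n) ℂ) * Matrix.diagonal (Complex.ofReal ∘ x) *
      star (U : Matrix (Fin n) (Fin n) ℂ)) (z : ℝ) :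
    ∏ i, (z - muE B i) = ∏ i, (z - x i) := by
  have h1 := det_eq_prod_muE B z
  rw [hB, aux_det_conj] at h1
  exact_mod_cast h1.symm


end RationalRelationAux

/-- **Nowhere density of rational eigenvalue relations.**  Let `V` be an `n`-dimensional
complex inner product space (realized as `ℂⁿ`) and `Herm(V)` the real vector space of
hermitian endomorphisms (hermitian `n × n` matrices).  For every nonzero rational linear
form `λ ∈ (ℚⁿ)^*`, the set `S_λ = {A ∈ Herm(V) : λ(X(A)) = 0}`, where `X(A)` is the
ordered tuple of eigenvalues of `A` counted with multiplicity, is nowhere dense. -/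
theorem rational_relation_nowhere_dense (n : ℕ) (hn : 0 < n)
    (lam : Fin n → ℚ) (hlam : lam ≠ 0) :
    IsNowhereDense
      {A : {M : Matrix (Fin n) (Fin n) ℂ // M.IsHermitian} |
        ∑ i, (lam i : ℝ) * orderedEigenvalues A.2 i = 0} := by
  have hf : Continuous (fun A : {M : Matrix (Fin n) (Fin n) ℂ // M.IsHermitian} =>
      ∑ i, (lam i : ℝ) * muE A i) :=
    continuous_finset_sum _ fun i _ =>
      continuous_const.mul ((continuous_apply i).comp continuous_muE)
  have hSeq : {A : {M : Matrix (Fin n) (Fin n) ℂ // M.IsHermitian} |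
        ∑ i, (lam i : ℝ) * orderedEigenvalues A.2 i = 0}
      = (fun A => ∑ i, (lam i : ℝ) * muE A i) ⁻¹' ({0} : Set ℝ) := rfl
  rw [hSeq]
  have hSclosed : IsClosed ((fun A => ∑ i, (lam i : ℝ) * muE A i) ⁻¹' ({0} : Set ℝ)) :=
    isClosed_singleton.preimage hf
  rw [hSclosed.isNowhereDense_iff, Set.eq_empty_iff_forall_notMem]
  intro A hA
  obtain ⟨w, hwmono, hwne⟩ := aux_exists_w lam hlam
  set U := A.2.eigenvectorUnitary with hU
  set v := A.2.eigenvalues with hv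
  set τ := Tuple.sort v with hτ
  set e' : Fin n → ℝ := fun i => w (τ.symm i) with he'
  have hherm : ∀ t : ℝ, ((U : Matrix (Fin n) (Fin n) ℂ) *
      Matrix.diagonal (Complex.ofReal ∘ (fun i => v i + t * e' i)) *
      star (U : Matrix (Fin n) (Fin n) ℂ)).IsHermitian := fun t => aux_isHermitian U _
  set φ : ℝ → {M : Matrix (Fin n) (Fin n) ℂ // M.IsHermitian} :=
    fun t => ⟨_, hherm t⟩ with hφ
  have hφcont : Continuous φ := by
    apply Continuous.subtype_mk
    refine (continuous_const.matrix_mul (Continuous.matrix_diagonal ?_)).matrix_mul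
      continuous_const
    exact continuous_pi fun i =>
      Complex.continuous_ofReal.comp (continuous_const.add (continuous_id.mul continuous_const))
  have hφ0 : φ 0 = A := by
    apply Subtype.ext
    show (U : Matrix (Fin n) (Fin n) ℂ) * _ * _ = A.1
    conv_rhs => rw [A.2.spectral_theorem, Unitary.conjStarAlgAut_apply]
    congr 1
    congr 1
    congr 1
    funext i
    simp
    rfl
  have hAS : ∑ i, (lam i : ℝ) * muE A i = 0 := by
    have := interior_subset hA
    simpa using this
  have hmu : ∀ t : ℝ, 0 < t → muE (φ t) = fun i => muE A i + t * w i := by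
    intro t ht
    have hmono : Monotone (fun i => muE A i + t * w i) := by
      intro i k hik
      exact add_le_add (muE_monotone A hik)
        (mul_le_mul_of_nonneg_left (hwmono.monotone hik) ht.le)
    apply aux_monotone_ext (muE_monotone (φ t)) hmono
    intro z
    rw [aux_prod_mu_conj U _ (φ t) rfl z]
    rw [← Equiv.prod_comp τ (fun i => z - (v i + t * e' i))]
    apply Finset.prod_congr rfl
    intro i _
    have h1 : e' (τ i) = w i := by rw [he']; simp
    have h2 : v (τ i) = muE A i := rfl
    rw [h1, h2]
  have hopen : φ ⁻¹' (interior ((fun A => ∑ i, (lam i : ℝ) * muE A i) ⁻¹' ({0} : Set ℝ)))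
      ∈ nhds (0 : ℝ) :=
    hφcont.continuousAt.preimage_mem_nhds (isOpen_interior.mem_nhds (by rw [hφ0]; exact hA))
  have hsub : ∀ᶠ t in nhdsWithin (0:ℝ) (Set.Ioi 0),
      φ t ∈ interior ((fun A => ∑ i, (lam i : ℝ) * muE A i) ⁻¹' ({0} : Set ℝ)) :=
    nhdsWithin_le_nhds hopen
  obtain ⟨t, htpre, htpos⟩ := (hsub.and eventually_mem_nhdsWithin).exists
  have h0 : ∑ i, (lam i : ℝ) * muE (φ t) i = 0 := by
    have := interior_subset htpre
    simpa using this
  rw [hmu t htpos] at h0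
  have hsplit : ∑ i, (lam i : ℝ) * (muE A i + t * w i)
      = (∑ i, (lam i : ℝ) * muE A i) + t * ∑ i, (lam i : ℝ) * w i := by
    simp only [mul_add, Finset.sum_add_distrib, Finset.mul_sum]
    congr 1
    exact Finset.sum_congr rfl fun i _ => by ring
  rw [hsplit, hAS, zero_add] at h0
  exact hwne ((mul_eq_zero.mp h0).resolve_left htpos.ne')
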